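/- Let R be an integral domain and let f ∈ R[[x]] be a univariate power series with constant term 1. Then there exist unique elements a_k ∈ R for k ≥ 1 such that f = ∏_{k≥1} (1 − a_k x^k), where the infinite product converges coefficientwise. -/

import Mathlib

open PowerSeries

noncomputable def aSeq {R : Type*} [CommRing R] (f : PowerSeries R) : ℕ → R
  | 0 => 0
  | (N+1) =>
      PowerSeries.coeff (R := R) (N+1)
        (∏ k ∈ (Finset.Icc 1 N).attach,
          (1 - PowerSeries.C (R := R) (aSeq f k) * PowerSeries.X ^ (k : ℕ)))
      - PowerSeries.coeff (R := R) (N+1) f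
termination_by N => N
decreasing_by
  have := (Finset.mem_Icc.mp k.2).2; omega

lemma aSeq_succ {R : Type*} [CommRing R] (f : PowerSeries R) (N : ℕ) :
    aSeq f (N+1) =
      PowerSeries.coeff (R := R) (N+1)
        (∏ k ∈ Finset.Icc 1 N,
          (1 - PowerSeries.C (R := R) (aSeq f k) * PowerSeries.X ^ k))
      - PowerSeries.coeff (R := R) (N+1) f := by
  rw [aSeq, ← Finset.prod_attach (Finset.Icc 1 N)
    (fun k => 1 - PowerSeries.C (R := R) (aSeq f k) * PowerSeries.X ^ k)]

lemma constCoeff_prod {R : Type*} [CommRing R] (a : ℕ → R) (N : ℕ) :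
    PowerSeries.constantCoeff (R := R)
      (∏ k ∈ Finset.Icc 1 N, (1 - PowerSeries.C (R := R) (a k) * PowerSeries.X ^ k)) = 1 := by
  rw [map_prod]
  apply Finset.prod_eq_one
  intro k hk
  have hk1 : 1 ≤ k := (Finset.mem_Icc.mp hk).1
  simp [constantCoeff_X, zero_pow (by omega : k ≠ 0)]

lemma coeff_prod_step {R : Type*} [CommRing R] (a : ℕ → R) (N : ℕ) :
    PowerSeries.coeff (R := R) (N+1)
      (∏ k ∈ Finset.Icc 1 (N+1), (1 - PowerSeries.C (R := R) (a k) * PowerSeries.X ^ k)) =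
    PowerSeries.coeff (R := R) (N+1)
      (∏ k ∈ Finset.Icc 1 N, (1 - PowerSeries.C (R := R) (a k) * PowerSeries.X ^ k))
    - a (N+1) := by
  rw [Finset.prod_Icc_succ_top (by omega : 1 ≤ N + 1)]
  set P := ∏ k ∈ Finset.Icc 1 N, (1 - PowerSeries.C (R := R) (a k) * PowerSeries.X ^ k) with hP
  rw [mul_sub, mul_one, map_sub]
  congr 1
  have : P * (PowerSeries.C (R := R) (a (N+1)) * PowerSeries.X ^ (N+1))
      = (P * PowerSeries.C (R := R) (a (N+1))) * PowerSeries.X ^ (N+1) := by ring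
  rw [this]
  have h := PowerSeries.coeff_mul_X_pow (P * PowerSeries.C (R := R) (a (N+1))) (N+1) 0
  rw [zero_add] at h
  rw [h, PowerSeries.coeff_zero_eq_constantCoeff, map_mul, constCoeff_prod a N,
    one_mul, PowerSeries.constantCoeff_C]

/-- Every power series with constant term 1 over an integral domain has a unique
expansion as an infinite product `∏_{k≥1} (1 - a_k x^k)`, converging coefficientwise:
for each `N`, the coefficient of `x^N` of `f` agrees with that of the partial product
`∏_{1 ≤ k ≤ N} (1 - a_k x^k)` (factors with `k > N` do not affect this coefficient). -/
theorem powerSeries_prod_decomposition (R : Type*) [CommRing R] [IsDomain R]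
    (f : PowerSeries R) (hf : PowerSeries.constantCoeff (R := R) f = 1) :
    ∃! a : ℕ → R, a 0 = 0 ∧ ∀ N : ℕ,
      PowerSeries.coeff (R := R) N f =
        PowerSeries.coeff (R := R) N
          (∏ k ∈ Finset.Icc 1 N, (1 - PowerSeries.C (R := R) (a k) * PowerSeries.X ^ k)) := by
  refine ⟨aSeq f, ⟨by rw [aSeq], ?_⟩, ?_⟩
  · intro N
    cases N with
    | zero => simp [PowerSeries.coeff_zero_eq_constantCoeff, hf]
    | succ n =>
      rw [coeff_prod_step (aSeq f) n, aSeq_succ f n]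
      ring
  · intro b ⟨hb0, hb⟩
    funext N
    induction N using Nat.strong_induction_on with
    | _ N ih =>
      cases N with
      | zero => rw [hb0, aSeq]
      | succ n =>
        have hprod : (∏ k ∈ Finset.Icc 1 n,
            (1 - PowerSeries.C (R := R) (b k) * PowerSeries.X ^ k)) =
            ∏ k ∈ Finset.Icc 1 n,
            (1 - PowerSeries.C (R := R) (aSeq f k) * PowerSeries.X ^ k) := by
          apply Finset.prod_congr rfl
          intro k hk
          rw [ih k (by have := (Finset.mem_Icc.mp hk).2; omega)]
        have := hb (n+1)
        rw [coeff_prod_step b n, hprod] at this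
        rw [aSeq_succ f n]
        linear_combination this
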